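/- Let (X, ‖·‖) be a quasi-normed space and T : X → X a (b,θ)-enriched contraction with b > 0. Set λ = 1/(b+1) and let T_λ x = (1−λ)x + λTx. Then T_λ is a Banach contraction with contraction coefficient c = λθ ∈ [0,1), that is, ‖T_λ x − T_λ y‖ ≤ c‖x−y‖ for all x, y ∈ X. -/

import Mathlib

/-- if T is a (b,θ)-enriched contraction with b > 0 then, with
λ = 1/(b+1) and c = λθ, the averaged map T_λ is a c-contraction and c ∈ [0,1). -/
theorem stmt_5 {X : Type*} [AddCommGroup X] [Module ℝ X] (Nm : X → ℝ) (C : ℝ)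
    (hC : 1 ≤ C)
    (hnn : ∀ x, 0 ≤ Nm x)
    (h0 : ∀ x, Nm x = 0 ↔ x = 0)
    (h1 : ∀ (r : ℝ) (x : X), Nm (r • x) = |r| * Nm x)
    (h2 : ∀ x y, Nm (x + y) ≤ C * (Nm x + Nm y))
    (T : X → X) (b θ : ℝ) (hb : 0 < b) (hθ0 : 0 ≤ θ) (hθ : θ < b + 1)
    (hT : ∀ x y, Nm (b • (x - y) + (T x - T y)) ≤ θ * Nm (x - y)) :
    (0 ≤ (1 / (b + 1)) * θ ∧ (1 / (b + 1)) * θ < 1) ∧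
    ∀ x y : X,
      Nm (((1 - 1 / (b + 1)) • x + (1 / (b + 1)) • T x) -
          ((1 - 1 / (b + 1)) • y + (1 / (b + 1)) • T y)) ≤
        ((1 / (b + 1)) * θ) * Nm (x - y) := by
  have hb1 : (0:ℝ) < b + 1 := by linarith
  have hlam : (0:ℝ) < 1 / (b + 1) := by positivity
  constructor
  · constructor
    · positivity
    · rw [div_mul_eq_mul_div, one_mul, div_lt_one hb1]; exact hθ
  · intro x y
    have key : ((1 - 1 / (b + 1)) • x + (1 / (b + 1)) • T x) -
          ((1 - 1 / (b + 1)) • y + (1 / (b + 1)) • T y)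
        = (1 / (b + 1)) • (b • (x - y) + (T x - T y)) := by
      rw [smul_add, smul_smul]
      rw [show (1 / (b + 1)) * b = 1 - 1 / (b + 1) by field_simp; ring]
      module
    rw [key, h1, abs_of_pos hlam, mul_assoc]
    exact mul_le_mul_of_nonneg_left (hT x y) hlam.le
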